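/- For α ≥ 0, μ, ρ_t, E, ρ̄ > 0, h > 0, and β ∈ ℤ, both roots of the quadratic λ² - [α + (4μ/(ρ_t h²))·sin²(πβh)]·λ + α·(4μ/(ρ_t h²))·sin²(πβh) + (E√ρ̄/(ρ_t h²))·sin²(2πβh) = 0 have non-negative real part; hence the semi-discrete finite-difference scheme is linearly stable for all mesh sizes h > 0. -/
import Mathlib


open Real

lemma quad_root_re_nonneg (b c : ℝ) (hb : 0 ≤ b) (hc : 0 ≤ c) (lam : ℂ)
    (h : lam ^ 2 - (b : ℂ) * lam + (c : ℂ) = 0) : 0 ≤ lam.re := by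
  have hre := congrArg Complex.re h
  have him := congrArg Complex.im h
  simp [pow_two, Complex.mul_re, Complex.mul_im] at hre him
  by_contra hx
  push_neg at hx
  have h2 : lam.im * (2 * lam.re - b) = 0 := by nlinarith
  rcases mul_eq_zero.mp h2 with hy | hxb
  · nlinarith
  · nlinarith

/-- Von Neumann stability of the semi-discrete finite-difference scheme: for α ≥ 0,
positive parameters, any mesh h > 0 and discrete Fourier mode β, both roots of the
discrete characteristic quadratic have non-negative real part. -/
theorem stmt_6 (α μ ρt E ρbar h : ℝ) (β : ℤ)
    (hα : 0 ≤ α) (hμ : 0 < μ) (hρt : 0 < ρt) (hE : 0 < E) (hρ : 0 < ρbar)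
    (hh : 0 < h) :
    ∀ lam : ℂ,
      lam ^ 2
          - ((α + 4 * μ / (ρt * h ^ 2) * Real.sin (π * β * h) ^ 2 : ℝ) : ℂ) * lam
          + ((α * (4 * μ / (ρt * h ^ 2)) * Real.sin (π * β * h) ^ 2
              + E * Real.sqrt ρbar / (ρt * h ^ 2) * Real.sin (2 * π * β * h) ^ 2 : ℝ) : ℂ)
        = 0 → 0 ≤ lam.re := by
  intro lam hlam
  apply quad_root_re_nonneg _ _ _ _ lam hlam
  · positivity
  · have := Real.sqrt_nonneg ρbar
    positivity
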